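/- Let Λ be a discrete subgroup of ℝ^k. Then for any C > 0, the set of primitive subgroups Δ of Λ (i.e. subgroups with ℝ-span(Δ) ∩ Λ = Δ) whose covolume in their ℝ-span is less than C is finite. -/

import Mathlib

open Set

open Matrix BigOperators

open Module

/-- The covolume of the discrete subgroup with ℤ-basis `γ₁, …, γ_m` inside its ℝ-span:
`‖γ₁ ∧ ⋯ ∧ γ_m‖`, computed as the square root of the Gram determinant. -/
noncomputable def covol {k m : ℕ} (γ : Fin m → (Fin k → ℝ)) : ℝ :=
  Real.sqrt (Matrix.det (Matrix.of fun i j => dotProduct (γ i) (γ j)))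


/-- Expansion of `det (A * B)` by multilinearity over rows of `B`. -/
theorem detExpand {m n : ℕ} {R : Type*} [CommRing R] (A : Matrix (Fin m) (Fin n) R)
    (B : Matrix (Fin n) (Fin m) R) :
    (A * B).det = ∑ f : Fin m → Fin n, (∏ i, A i (f i)) * (B.submatrix f id).det := by
  have h1 : (A * B) = fun i => ∑ j : Fin n, A i j • B j := by
    ext i l
    simp [Matrix.mul_apply, Finset.sum_apply]
  have key := (Matrix.detRowAlternating (R := R) (n := Fin m)).toMultilinearMap.map_sum
    (fun (i : Fin m) (j : Fin n) => A i j • B j)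
  have key2 : ∀ f : Fin m → Fin n,
      (Matrix.detRowAlternating (R := R) (n := Fin m)).toMultilinearMap
        (fun i => A i (f i) • B (f i)) = (∏ i, A i (f i)) * (B.submatrix f id).det := by
    intro f
    have := (Matrix.detRowAlternating (R := R) (n := Fin m)).toMultilinearMap.map_smul_univ
      (fun i => A i (f i)) (fun i => B (f i))
    rw [this, smul_eq_mul]
    rfl
  calc (A * B).det
      = (Matrix.detRowAlternating (R := R) (n := Fin m)).toMultilinearMap
          (fun i => ∑ j : Fin n, A i j • B j) := by rw [h1]; rfl
    _ = ∑ f : Fin m → Fin n,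
          (Matrix.detRowAlternating (R := R) (n := Fin m)).toMultilinearMap
            (fun i => A i (f i) • B (f i)) := key
    _ = ∑ f : Fin m → Fin n, (∏ i, A i (f i)) * (B.submatrix f id).det := by
          exact Finset.sum_congr rfl fun f _ => key2 f

section Group

variable {m k : ℕ}

/-- Uniqueness of the (sorted injection, permutation) factorization. -/
theorem emb_perm_uniq {S S' : {S : Finset (Fin k) // S.card = m}}
    {σ σ' : Equiv.Perm (Fin m)}
    (h : (S.1.orderEmbOfFin S.2) ∘ σ = (S'.1.orderEmbOfFin S'.2) ∘ σ') :
    S = S' ∧ σ = σ' := by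
  have hrange : Set.range ((S.1.orderEmbOfFin S.2) ∘ σ) = (S.1 : Set (Fin k)) := by
    rw [Set.range_comp, Equiv.range_eq_univ, Set.image_univ, Finset.range_orderEmbOfFin]
  have hrange' : Set.range ((S'.1.orderEmbOfFin S'.2) ∘ σ') = (S'.1 : Set (Fin k)) := by
    rw [Set.range_comp, Equiv.range_eq_univ, Set.image_univ, Finset.range_orderEmbOfFin]
  have hSS : S = S' := by
    apply Subtype.ext
    apply Finset.coe_injective
    rw [← hrange, ← hrange', h]
  subst hSS
  refine ⟨rfl, ?_⟩
  have hinj : Function.Injective (S.1.orderEmbOfFin S.2) :=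
    (S.1.orderEmbOfFin S.2).injective
  exact Equiv.ext (fun i => hinj (congrFun h i))

theorem exists_emb_perm {f : Fin m → Fin k} (hf : Function.Injective f) :
    ∃ (S : {S : Finset (Fin k) // S.card = m}) (σ : Equiv.Perm (Fin m)),
      (S.1.orderEmbOfFin S.2) ∘ σ = f := by
  classical
  have hcard : (Finset.univ.image f).card = m := by
    rw [Finset.card_image_of_injective _ hf, Finset.card_univ, Fintype.card_fin]
  refine ⟨⟨Finset.univ.image f, hcard⟩, ?_⟩
  have hmem : ∀ i, f i ∈ Finset.univ.image f := fun i =>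
    Finset.mem_image_of_mem f (Finset.mem_univ i)
  let u : Fin m → Fin m := fun i =>
    ((Finset.univ.image f).orderIsoOfFin hcard).symm ⟨f i, hmem i⟩
  have hu : Function.Injective u := by
    intro i j hij
    have := congrArg ((Finset.univ.image f).orderIsoOfFin hcard) hij
    simp only [OrderIso.apply_symm_apply, u] at this
    exact hf (congrArg Subtype.val this)
  refine ⟨Equiv.ofBijective u ((Finite.injective_iff_bijective).1 hu), ?_⟩
  funext i
  show (Finset.univ.image f).orderEmbOfFin hcard (u i) = f i
  rw [← Finset.coe_orderIsoOfFin_apply]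
  simp [u]

theorem exists_emb_perm' {f : Fin m → Fin k} (hf : Function.Injective f) :
    ∃ p : {S : Finset (Fin k) // S.card = m} × Equiv.Perm (Fin m),
      (p.1.1.orderEmbOfFin p.1.2) ∘ p.2 = f := by
  obtain ⟨S, σ, h⟩ := exists_emb_perm hf
  exact ⟨(S, σ), h⟩

/-- Group a sum over all functions (vanishing on non-injective ones) into a sum over
sorted injections composed with permutations. -/
theorem sum_group {M : Type*} [AddCommMonoid M] (F : (Fin m → Fin k) → M)
    (h0 : ∀ f, ¬ Function.Injective f → F f = 0) :
    ∑ f : Fin m → Fin k, F f =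
      ∑ S : {S : Finset (Fin k) // S.card = m}, ∑ σ : Equiv.Perm (Fin m),
        F ((S.1.orderEmbOfFin S.2) ∘ σ) := by
  classical
  have hprod : ∑ p : {S : Finset (Fin k) // S.card = m} × Equiv.Perm (Fin m),
      F ((p.1.1.orderEmbOfFin p.1.2) ∘ p.2)
      = ∑ S : {S : Finset (Fin k) // S.card = m}, ∑ σ : Equiv.Perm (Fin m),
        F ((S.1.orderEmbOfFin S.2) ∘ σ) := Fintype.sum_prod_type _
  rw [← hprod]
  rw [← Finset.sum_filter_of_ne (s := Finset.univ) (p := fun f => Function.Injective f)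
    (fun f _ hF => by by_contra h; exact hF (h0 f h))]
  by_cases hex : ∃ g : Fin m → Fin k, Function.Injective g
  · have junk : {S : Finset (Fin k) // S.card = m} × Equiv.Perm (Fin m) :=
      (exists_emb_perm' hex.choose_spec).choose
    refine (Finset.sum_nbij'
      (i := fun p : {S : Finset (Fin k) // S.card = m} × Equiv.Perm (Fin m) =>
        (p.1.1.orderEmbOfFin p.1.2) ∘ p.2)
      (j := fun f => if hf : Function.Injective f then (exists_emb_perm' hf).choose else junk)
      ?_ ?_ ?_ ?_ ?_).symm
    · intro p _
      simp only [Finset.mem_filter, Finset.mem_univ, true_and]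
      exact (p.1.1.orderEmbOfFin p.1.2).injective.comp p.2.injective
    · intro f _
      exact Finset.mem_univ _
    · intro p _
      have hinj : Function.Injective ((p.1.1.orderEmbOfFin p.1.2) ∘ p.2) :=
        (p.1.1.orderEmbOfFin p.1.2).injective.comp p.2.injective
      rw [dif_pos hinj]
      obtain ⟨h1, h2⟩ := emb_perm_uniq ((exists_emb_perm' hinj).choose_spec)
      exact Prod.ext h1 h2
    · intro f hf
      simp only [Finset.mem_filter, Finset.mem_univ, true_and] at hf
      rw [dif_pos hf]
      exact (exists_emb_perm' hf).choose_spec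
    · intro p _
      rfl
  · rw [Finset.sum_eq_zero, Finset.sum_eq_zero]
    · intro p _
      exact absurd ⟨_, (p.1.1.orderEmbOfFin p.1.2).injective.comp p.2.injective⟩ hex
    · intro f hf
      simp only [Finset.mem_filter, Finset.mem_univ, true_and] at hf
      exact absurd ⟨f, hf⟩ hex

end Group

section CB

variable {m k : ℕ}

/-- Determinant of a column permutation. -/
theorem det_submatrix_perm (N : Matrix (Fin m) (Fin m) ℝ) (σ : Equiv.Perm (Fin m)) :
    (N.submatrix id σ).det = (Equiv.Perm.sign σ : ℝ) * N.det := by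
  rw [← Matrix.det_transpose (N.submatrix id σ), Matrix.transpose_submatrix,
    Matrix.det_permute, Matrix.det_transpose]

theorem det_eq_sum_sign_prod (A : Matrix (Fin m) (Fin k) ℝ) (t : Fin m → Fin k) :
    (A.submatrix id t).det = ∑ σ : Equiv.Perm (Fin m),
      (Equiv.Perm.sign σ : ℝ) * ∏ i, A i (t (σ i)) := by
  rw [← Matrix.det_transpose (A.submatrix id t), Matrix.det_apply']
  refine Finset.sum_congr rfl fun σ _ => rfl

/-- Cauchy–Binet. -/
theorem det_mul_CB (A : Matrix (Fin m) (Fin k) ℝ) (B : Matrix (Fin k) (Fin m) ℝ) :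
    (A * B).det = ∑ S : {S : Finset (Fin k) // S.card = m},
      (A.submatrix id (S.1.orderEmbOfFin S.2)).det *
        (B.submatrix (S.1.orderEmbOfFin S.2) id).det := by
  rw [detExpand]
  rw [sum_group (fun f => (∏ i, A i (f i)) * (B.submatrix f id).det) (fun f hf => by
    obtain ⟨a, b, hab, hne⟩ := Function.not_injective_iff.1 hf
    have : (B.submatrix f id) a = (B.submatrix f id) b := by
      funext j; simp [Matrix.submatrix_apply, hab]
    rw [Matrix.det_zero_of_row_eq hne this, mul_zero])]
  refine Finset.sum_congr rfl fun S _ => ?_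
  rw [det_eq_sum_sign_prod, Finset.sum_mul]
  refine Finset.sum_congr rfl fun σ _ => ?_
  have hsub : B.submatrix ((S.1.orderEmbOfFin S.2) ∘ σ) id
      = (B.submatrix (S.1.orderEmbOfFin S.2) id).submatrix σ id := by
    rw [Matrix.submatrix_submatrix]; rfl
  rw [hsub]
  have : ((B.submatrix (S.1.orderEmbOfFin S.2) id).submatrix (⇑σ) id).det
      = (Equiv.Perm.sign σ : ℝ) * (B.submatrix (S.1.orderEmbOfFin S.2) id).det :=
    Matrix.det_permute σ _
  rw [this]
  simp only [Function.comp_apply]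
  ring

end CB

section Gram

variable {m k : ℕ}

theorem gram_eq (γ : Fin m → Fin k → ℝ) :
    (Matrix.of fun i j => dotProduct (γ i) (γ j))
      = (Matrix.of γ) * (Matrix.of γ)ᵀ := by
  ext i j
  simp [Matrix.mul_apply, dotProduct]

theorem gram_det_eq_sum_sq (γ : Fin m → Fin k → ℝ) :
    (Matrix.of fun i j => dotProduct (γ i) (γ j)).det
      = ∑ S : {S : Finset (Fin k) // S.card = m},
          ((Matrix.of γ).submatrix id (S.1.orderEmbOfFin S.2)).det ^ 2 := by
  rw [gram_eq, det_mul_CB]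
  refine Finset.sum_congr rfl fun S _ => ?_
  rw [← Matrix.transpose_submatrix, Matrix.det_transpose, sq]

theorem gram_det_nonneg (γ : Fin m → Fin k → ℝ) :
    0 ≤ (Matrix.of fun i j => dotProduct (γ i) (γ j)).det := by
  rw [gram_det_eq_sum_sq]
  exact Finset.sum_nonneg fun S _ => sq_nonneg _

theorem minor_sq_le_gram (γ : Fin m → Fin k → ℝ) {s : Fin m → Fin k}
    (hs : Function.Injective s) :
    ((Matrix.of γ).submatrix id s).det ^ 2
      ≤ (Matrix.of fun i j => dotProduct (γ i) (γ j)).det := by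
  obtain ⟨S, σ, hf⟩ := exists_emb_perm hs
  have h1 : ((Matrix.of γ).submatrix id s).det ^ 2
      = ((Matrix.of γ).submatrix id (S.1.orderEmbOfFin S.2)).det ^ 2 := by
    rw [← hf]
    have : (Matrix.of γ).submatrix id ((S.1.orderEmbOfFin S.2) ∘ σ)
        = ((Matrix.of γ).submatrix id (S.1.orderEmbOfFin S.2)).submatrix id σ := by
      rw [Matrix.submatrix_submatrix]; rfl
    rw [this, det_submatrix_perm, mul_pow]
    rcases Int.units_eq_one_or (Equiv.Perm.sign σ) with h | h <;> simp [h]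
  rw [h1, gram_det_eq_sum_sq]
  exact Finset.single_le_sum
    (f := fun T : {S : Finset (Fin k) // S.card = m} =>
      ((Matrix.of γ).submatrix id (T.1.orderEmbOfFin T.2)).det ^ 2)
    (fun T _ => sq_nonneg _) (Finset.mem_univ S)

/-- All minors of a matrix whose rows give covolume `< C` are bounded by `C`. -/
theorem minor_abs_le_of_covol_lt {C : ℝ} (hC : 0 < C) (γ : Fin m → Fin k → ℝ)
    (h : Real.sqrt (Matrix.det (Matrix.of fun i j => dotProduct (γ i) (γ j))) < C)
    (s : Fin m → Fin k) :
    |((Matrix.of γ).submatrix id s).det| ≤ C := by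
  by_cases hs : Function.Injective s
  · have h1 : (Matrix.of fun i j => dotProduct (γ i) (γ j)).det < C ^ 2 := by
      have h2 := Real.sq_sqrt (gram_det_nonneg γ)
      nlinarith [Real.sqrt_nonneg (Matrix.det (Matrix.of fun i j => dotProduct (γ i) (γ j)))]
    have := (minor_sq_le_gram γ hs).trans_lt h1
    have h3 := abs_le_of_sq_le_sq' this.le hC.le
    exact abs_le.mpr h3
  · have : ∃ a b, s a = s b ∧ a ≠ b := Function.not_injective_iff.1 hs
    obtain ⟨a, b, hab, hne⟩ := this
    have hcol : ((Matrix.of γ).submatrix id s)ᵀ a = ((Matrix.of γ).submatrix id s)ᵀ b := by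
      funext j; simp [hab]
    rw [← Matrix.det_transpose, Matrix.det_zero_of_row_eq hne hcol, abs_zero]
    exact hC.le

end Gram

section Pair

variable {m k : ℕ}

/-- Pairing a family of vectors with a family of functionals, expanded over minors. -/
theorem det_pair (ψ : Fin m → ((Fin k → ℝ) →ₗ[ℝ] ℝ)) (v : Fin m → Fin k → ℝ) :
    (Matrix.of fun a b => ψ a (v b)).det
      = ∑ s : Fin m → Fin k, (∏ a, ψ a (Pi.single (s a) (1 : ℝ)))
          * ((Matrix.of v).submatrix id s).det := by
  classical
  have hsingle : ∀ w : Fin k → ℝ, w = ∑ l : Fin k, w l • (Pi.single l (1 : ℝ) : Fin k → ℝ) := by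
    intro w
    funext j
    rw [Finset.sum_apply]
    simp [Pi.single_apply]
  have hexpand : ∀ (a : Fin m) (w : Fin k → ℝ),
      ψ a w = ∑ l : Fin k, ψ a (Pi.single l (1 : ℝ)) * w l := by
    intro a w
    conv_lhs => rw [hsingle w]
    rw [map_sum]
    refine Finset.sum_congr rfl fun l _ => ?_
    rw [LinearMap.map_smul, smul_eq_mul, mul_comm]
  have hP : (Matrix.of fun a b => ψ a (v b))
      = (Matrix.of fun a l => ψ a (Pi.single l (1 : ℝ))) * (Matrix.of v)ᵀ := by
    ext a b
    rw [Matrix.mul_apply]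
    simp only [Matrix.of_apply, Matrix.transpose_apply]
    exact hexpand a (v b)
  rw [hP, detExpand]
  refine Finset.sum_congr rfl fun s _ => ?_
  congr 1
  rw [← Matrix.det_transpose, Matrix.transpose_submatrix, Matrix.transpose_transpose]

/-- A linearly independent family admits a dual family of functionals. -/
theorem exists_dual_family {γ : Fin m → Fin k → ℝ} (hγ : LinearIndependent ℝ γ) :
    ∃ φ : Fin m → ((Fin k → ℝ) →ₗ[ℝ] ℝ),
      ∀ a b, φ a (γ b) = if a = b then 1 else 0 := by
  classical
  let B := Basis.span hγ
  have hmem : ∀ b, γ b ∈ Submodule.span ℝ (Set.range γ) :=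
    fun b => Submodule.subset_span ⟨b, rfl⟩
  have hφ : ∀ a : Fin m, ∃ g : (Fin k → ℝ) →ₗ[ℝ] ℝ,
      g ∘ₗ (Submodule.span ℝ (Set.range γ)).subtype = B.coord a :=
    fun a => LinearMap.exists_extend (B.coord a)
  choose φ hφ using hφ
  refine ⟨φ, fun a b => ?_⟩
  have h1 : γ b = (Submodule.span ℝ (Set.range γ)).subtype ⟨γ b, hmem b⟩ := rfl
  rw [h1, ← LinearMap.comp_apply, hφ a]
  have h2 : (⟨γ b, hmem b⟩ : Submodule.span ℝ (Set.range γ)) = B b :=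
    (Basis.span_apply hγ b).symm
  rw [h2, Basis.coord_apply, Basis.repr_self]
  simp [Finsupp.single_apply, eq_comm]

/-- A linearly independent family of rows has a nonzero maximal minor. -/
theorem exists_nonzero_minor {γ : Fin m → Fin k → ℝ} (hγ : LinearIndependent ℝ γ) :
    ∃ s : Fin m → Fin k, ((Matrix.of γ).submatrix id s).det ≠ 0 := by
  classical
  obtain ⟨φ, hφ⟩ := exists_dual_family hγ
  have h1 : (Matrix.of fun a b => φ a (γ b)).det = 1 := by
    have : (Matrix.of fun a b => φ a (γ b)) = (1 : Matrix (Fin m) (Fin m) ℝ) := by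
      ext a b
      rw [Matrix.of_apply, hφ a b, Matrix.one_apply]
    rw [this, Matrix.det_one]
  rw [det_pair] at h1
  by_contra hc
  push_neg at hc
  rw [Finset.sum_eq_zero (fun s _ => by rw [hc s, mul_zero])] at h1
  exact one_ne_zero h1.symm

end Pair

section Plucker

variable {m k : ℕ}

/-- Recovery of entries from maximal minors after normalization. -/
theorem entry_eq_minor {N : Matrix (Fin m) (Fin k) ℝ} {S : Fin m → Fin k}
    (hN : N.submatrix id S = 1) (i : Fin m) (j : Fin k) :
    N i j = (N.submatrix id (Function.update S i j)).det := by
  classical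
  have h1 : N.submatrix id (Function.update S i j)
      = (N.submatrix id S).updateCol i (fun l => N l j) := by
    ext a b
    rw [Matrix.updateCol_apply, Matrix.submatrix_apply, Matrix.submatrix_apply]
    by_cases hb : b = i
    · subst hb; rw [if_pos rfl, Function.update_self]; rfl
    · rw [if_neg hb, Function.update_of_ne hb]
  rw [h1, hN, ← Matrix.cramer_apply, Matrix.cramer_one]
  rfl

theorem row_mem_span (Q : Matrix (Fin m) (Fin m) ℝ) (R : Matrix (Fin m) (Fin k) ℝ) (i : Fin m) :
    (Q * R) i ∈ Submodule.span ℝ (Set.range fun j => R j) := by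
  have h : (Q * R) i = ∑ j : Fin m, Q i j • R j := by
    funext l
    rw [Matrix.mul_apply, Finset.sum_apply]
    simp
  rw [h]
  exact Submodule.sum_mem _ fun j _ =>
    Submodule.smul_mem _ _ (Submodule.subset_span ⟨j, rfl⟩)

theorem span_rows_mul_eq {Q : Matrix (Fin m) (Fin m) ℝ} (hQ : IsUnit Q.det)
    (R : Matrix (Fin m) (Fin k) ℝ) :
    Submodule.span ℝ (Set.range fun i => (Q * R) i)
      = Submodule.span ℝ (Set.range fun i => R i) := by
  refine le_antisymm (Submodule.span_le.2 ?_) (Submodule.span_le.2 ?_)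
  · rintro x ⟨i, rfl⟩
    exact row_mem_span Q R i
  · rintro x ⟨i, rfl⟩
    have h : R i = (Q⁻¹ * (Q * R)) i := by rw [Matrix.nonsing_inv_mul_cancel_left _ _ hQ]
    show R i ∈ _
    rw [h]
    exact row_mem_span Q⁻¹ (Q * R) i

/-- Plücker: equal maximal minor vectors (with one nonzero) implies equal row spans. -/
theorem span_eq_of_minors_eq {M M' : Matrix (Fin m) (Fin k) ℝ}
    (hw : ∀ s : Fin m → Fin k, (M.submatrix id s).det = (M'.submatrix id s).det)
    {S : Fin m → Fin k} (hS : (M.submatrix id S).det ≠ 0) :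
    Submodule.span ℝ (Set.range fun i => M i) = Submodule.span ℝ (Set.range fun i => M' i) := by
  classical
  have hS' : (M'.submatrix id S).det ≠ 0 := by rw [← hw S]; exact hS
  set X := M.submatrix id S with hX
  set X' := M'.submatrix id S with hX'
  have hXu : IsUnit X.det := isUnit_iff_ne_zero.2 hS
  have hX'u : IsUnit X'.det := isUnit_iff_ne_zero.2 hS'
  have hsub : ∀ (P : Matrix (Fin m) (Fin m) ℝ) (Y : Matrix (Fin m) (Fin k) ℝ)
      (s : Fin m → Fin k), (P * Y).submatrix id s = P * (Y.submatrix id s) :=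
    fun P Y s => Matrix.submatrix_mul P Y id id s Function.bijective_id
  have hNsub : (X⁻¹ * M).submatrix id S = 1 := by
    rw [hsub, ← hX, Matrix.nonsing_inv_mul _ hXu]
  have hN'sub : (X'⁻¹ * M').submatrix id S = 1 := by
    rw [hsub, ← hX', Matrix.nonsing_inv_mul _ hX'u]
  have hdet : ∀ s : Fin m → Fin k,
      ((X⁻¹ * M).submatrix id s).det = ((X'⁻¹ * M').submatrix id s).det := by
    intro s
    rw [hsub, hsub, Matrix.det_mul, Matrix.det_mul, Matrix.det_nonsing_inv,
      Matrix.det_nonsing_inv, hw s, ← hw S]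
  have hNN' : X⁻¹ * M = X'⁻¹ * M' := by
    ext i j
    rw [entry_eq_minor hNsub i j, entry_eq_minor hN'sub i j, hdet]
  have h1 := span_rows_mul_eq (Matrix.isUnit_nonsing_inv_det X hXu) M
  have h2 := span_rows_mul_eq (Matrix.isUnit_nonsing_inv_det X' hX'u) M'
  rw [← h1, ← h2, hNN']

end Plucker

section Lattice

variable {k : ℕ}

theorem discrete_of_le {Δ Λ : Submodule ℤ (Fin k → ℝ)} (hΛ : DiscreteTopology Λ)
    (h : Δ ≤ Λ) : DiscreteTopology Δ :=
  DiscreteTopology.of_subset (s := (Λ : Set (Fin k → ℝ))) hΛ h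

theorem linearIndependent_coe_of_discrete (Δ : Submodule ℤ (Fin k → ℝ))
    [DiscreteTopology Δ] {m : ℕ} (b : Basis (Fin m) ℤ Δ) :
    LinearIndependent ℝ (fun i => (b i : Fin k → ℝ)) := by
  classical
  set E := Fin k → ℝ
  let V := Submodule.span ℝ (Δ : Set E)
  let f := V.subtype
  let Δ₀ := Δ.comap (f.restrictScalars ℤ)
  have h_img : f '' Δ₀ = Δ := by
    rw [← LinearMap.coe_restrictScalars ℤ f, ← Submodule.map_coe (f.restrictScalars ℤ),
      Submodule.map_comap_eq_self]
    exact fun x hx ↦ LinearMap.mem_range.mpr ⟨⟨x, Submodule.subset_span hx⟩, rfl⟩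
  haveI : DiscreteTopology Δ₀ := by
    refine DiscreteTopology.preimage_of_continuous_injective (Δ : Set E) ?_
      (Submodule.injective_subtype _)
    exact LinearMap.continuous_of_finiteDimensional f
  haveI : IsZLattice ℝ Δ₀ := ⟨by
    rw [← (Submodule.map_injective_of_injective (Submodule.injective_subtype _)).eq_iff,
      Submodule.map_span, Submodule.map_top, Submodule.range_subtype, h_img]⟩
  let e : Δ₀ ≃ₗ[ℤ] Δ :=
    { toFun := fun x => ⟨x.1.1, x.2⟩
      invFun := fun y => ⟨⟨y.1, Submodule.subset_span y.2⟩, y.2⟩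
      map_add' := fun x y => rfl
      map_smul' := fun c x => rfl
      left_inv := fun x => rfl
      right_inv := fun y => rfl }
  let b₀ : Basis (Fin m) ℤ Δ₀ := b.map e.symm
  let bR : Basis (Fin m) ℝ V := Basis.ofZLatticeBasis ℝ Δ₀ b₀
  have hli := bR.linearIndependent.map' V.subtype (Submodule.ker_subtype V)
  have heq : (V.subtype ∘ fun i => bR i) = fun i => (b i : E) := by
    funext i
    show ((bR i : V) : E) = (b i : E)
    rw [Basis.ofZLatticeBasis_apply]
    rfl
  rwa [heq] at hli

theorem card_le_of_discrete (Δ : Submodule ℤ (Fin k → ℝ))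
    [DiscreteTopology Δ] {m : ℕ} (b : Basis (Fin m) ℤ Δ) : m ≤ k := by
  have h := (linearIndependent_coe_of_discrete Δ b).fintype_card_le_finrank
  rwa [Fintype.card_fin, Module.finrank_fin_fun] at h

/-- The coercion of the ℤ-span of a basis of `Δ` back to the ambient space. -/
theorem span_coe_eq (Δ : Submodule ℤ (Fin k → ℝ)) {m : ℕ} (b : Basis (Fin m) ℤ Δ) :
    Submodule.span ℝ (Δ : Set (Fin k → ℝ))
      = Submodule.span ℝ (Set.range fun i => (b i : Fin k → ℝ)) := by
  have h1 : Submodule.span ℤ (Set.range fun i => (b i : Fin k → ℝ)) = Δ := by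
    have h2 : (Set.range fun i => (b i : Fin k → ℝ)) = Δ.subtype '' (Set.range b) := by
      rw [← Set.range_comp]; rfl
    rw [h2, ← Submodule.map_span, b.span_eq, Submodule.map_top, Submodule.range_subtype]
  conv_lhs => rw [← h1]
  rw [Submodule.span_span_of_tower]

end Lattice

section Counting

variable {k n m : ℕ}

/-- The family of minor-vectors of the basis matrix of the big lattice. -/
noncomputable def Efam (f : Fin n → Fin k → ℝ) (m : ℕ) :
    (Fin m → Fin n) → ((Fin m → Fin k) → ℝ) :=
  fun t s => ((Matrix.of f).submatrix t s).det

theorem Efam_noninj (f : Fin n → Fin k → ℝ) {t : Fin m → Fin n}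
    (ht : ¬ Function.Injective t) : Efam f m t = 0 := by
  obtain ⟨a, b, hab, hne⟩ := Function.not_injective_iff.1 ht
  funext s
  have : ((Matrix.of f).submatrix t s) a = ((Matrix.of f).submatrix t s) b := by
    funext j; simp [Matrix.submatrix_apply, hab]
  exact Matrix.det_zero_of_row_eq hne this

theorem Efam_comp_perm (f : Fin n → Fin k → ℝ) (t : Fin m → Fin n) (σ : Equiv.Perm (Fin m)) :
    Efam f m (t ∘ σ) = (Equiv.Perm.sign σ : ℝ) • Efam f m t := by
  funext s
  have h : (Matrix.of f).submatrix (t ∘ σ) s = ((Matrix.of f).submatrix t s).submatrix σ id := by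
    rw [Matrix.submatrix_submatrix]; rfl
  show ((Matrix.of f).submatrix (t ∘ σ) s).det = _
  rw [h, Matrix.det_permute]
  rfl

/-- The coefficient-extraction functional. -/
noncomputable def Lfun (φ : Fin n → ((Fin k → ℝ) →ₗ[ℝ] ℝ)) (t₀ : Fin m → Fin n) :
    ((Fin m → Fin k) → ℝ) →ₗ[ℝ] ℝ :=
  ∑ s : Fin m → Fin k, (∏ a, φ (t₀ a) (Pi.single (s a) (1 : ℝ))) • LinearMap.proj s

theorem Lfun_apply (φ : Fin n → ((Fin k → ℝ) →ₗ[ℝ] ℝ)) (t₀ : Fin m → Fin n)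
    (x : (Fin m → Fin k) → ℝ) :
    Lfun φ t₀ x = ∑ s : Fin m → Fin k, (∏ a, φ (t₀ a) (Pi.single (s a) (1 : ℝ))) * x s := by
  rw [Lfun, LinearMap.sum_apply]
  refine Finset.sum_congr rfl fun s _ => ?_
  rw [LinearMap.smul_apply, LinearMap.proj_apply, smul_eq_mul]

theorem Lfun_Efam {f : Fin n → Fin k → ℝ} {φ : Fin n → ((Fin k → ℝ) →ₗ[ℝ] ℝ)}
    (hφ : ∀ a b, φ a (f b) = if a = b then 1 else 0)
    (t₀ t : Fin m → Fin n) :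
    Lfun φ t₀ (Efam f m t)
      = (Matrix.of fun a b => if t₀ a = t b then (1 : ℝ) else 0).det := by
  rw [Lfun_apply]
  have h := det_pair (fun a => φ (t₀ a)) (fun b => f (t b))
  have h2 : (Matrix.of fun a b => (φ (t₀ a)) (f (t b)))
      = (Matrix.of fun a b => if t₀ a = t b then (1 : ℝ) else 0) := by
    ext a b; simp [hφ (t₀ a) (t b)]
  have h3 : ∀ s : Fin m → Fin k,
      ((Matrix.of fun b => f (t b)).submatrix id s) = (Matrix.of f).submatrix t s := by
    intro s; ext a b; rfl
  rw [h2] at h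
  rw [h]
  refine Finset.sum_congr rfl fun s _ => ?_
  rw [h3 s]
  rfl

theorem det_delta_noninj {t₀ t : Fin m → Fin n} (ht : ¬ Function.Injective t) :
    (Matrix.of fun a b => if t₀ a = t b then (1 : ℝ) else 0).det = 0 := by
  obtain ⟨a, b, hab, hne⟩ := Function.not_injective_iff.1 ht
  have hcol : (Matrix.of fun a b => if t₀ a = t b then (1 : ℝ) else 0)ᵀ a
      = (Matrix.of fun a b => if t₀ a = t b then (1 : ℝ) else 0)ᵀ b := by
    funext j; simp [hab]
  rw [← Matrix.det_transpose]
  exact Matrix.det_zero_of_row_eq hne hcol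

theorem det_delta_range_ne {t₀ t : Fin m → Fin n} (ht₀ : Function.Injective t₀)
    (ht : Function.Injective t) (hr : Set.range t₀ ≠ Set.range t) :
    (Matrix.of fun a b => if t₀ a = t b then (1 : ℝ) else 0).det = 0 := by
  classical
  have hex : ∃ a, t₀ a ∉ Set.range t := by
    by_contra hc
    push_neg at hc
    apply hr
    apply Set.eq_of_subset_of_ncard_le (Set.range_subset_iff.2 hc)
    · rw [← Set.image_univ, ← Set.image_univ, Set.ncard_image_of_injective _ ht,
        Set.ncard_image_of_injective _ ht₀]
  obtain ⟨a, ha⟩ := hex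
  apply Matrix.det_eq_zero_of_row_eq_zero a
  intro j
  simp only [Matrix.of_apply, ite_eq_right_iff]
  intro hj
  exact absurd ⟨j, hj.symm⟩ ha

theorem det_delta_perm {t₀ : Fin m → Fin n} (ht₀ : Function.Injective t₀)
    (σ : Equiv.Perm (Fin m)) :
    (Matrix.of fun a b => if t₀ a = (t₀ ∘ σ) b then (1 : ℝ) else 0).det
      = (Equiv.Perm.sign σ : ℝ) := by
  have h : (Matrix.of fun a b => if t₀ a = (t₀ ∘ σ) b then (1 : ℝ) else 0)
      = (1 : Matrix (Fin m) (Fin m) ℝ).submatrix id σ := by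
    ext a b
    simp only [Matrix.of_apply, Matrix.submatrix_apply, Matrix.one_apply, Function.comp_apply,
      ht₀.eq_iff]
    rfl
  rw [h, det_submatrix_perm, Matrix.det_one, mul_one]

end Counting

section Key

variable {k n m : ℕ}

theorem range_emb_comp {S : {S : Finset (Fin n) // S.card = m}} (σ : Equiv.Perm (Fin m)) :
    Set.range ((S.1.orderEmbOfFin S.2) ∘ σ) = (S.1 : Set (Fin n)) := by
  rw [Set.range_comp, Equiv.range_eq_univ, Set.image_univ, Finset.range_orderEmbOfFin]

theorem key_span {f : Fin n → Fin k → ℝ} {φ : Fin n → ((Fin k → ℝ) →ₗ[ℝ] ℝ)}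
    (hφ : ∀ a b, φ a (f b) = if a = b then 1 else 0)
    {x : (Fin m → Fin k) → ℝ} (hx : x ∈ Submodule.span ℤ (Set.range (Efam f m))) :
    (x = ∑ S : {S : Finset (Fin n) // S.card = m},
        Lfun φ (S.1.orderEmbOfFin S.2) x • Efam f m (S.1.orderEmbOfFin S.2))
    ∧ ∀ S : {S : Finset (Fin n) // S.card = m},
        ∃ z : ℤ, Lfun φ (S.1.orderEmbOfFin S.2) x = z := by
  classical
  induction hx using Submodule.span_induction with
  | mem x hxm =>
    obtain ⟨t, rfl⟩ := hxm
    by_cases ht : Function.Injective t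
    · obtain ⟨S₀, σ, hts⟩ := exists_emb_perm ht
      have hL : ∀ S : {S : Finset (Fin n) // S.card = m}, S ≠ S₀ →
          Lfun φ (S.1.orderEmbOfFin S.2) (Efam f m t) = 0 := by
        intro S hS
        rw [Lfun_Efam hφ]
        apply det_delta_range_ne (S.1.orderEmbOfFin S.2).injective ht
        rw [Finset.range_orderEmbOfFin, ← hts, range_emb_comp]
        intro hcoe
        exact hS (Subtype.ext (Finset.coe_injective hcoe))
      have hL0 : Lfun φ (S₀.1.orderEmbOfFin S₀.2) (Efam f m t) = (Equiv.Perm.sign σ : ℝ) := by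
        rw [Lfun_Efam hφ, ← hts]
        exact det_delta_perm (S₀.1.orderEmbOfFin S₀.2).injective σ
      constructor
      · rw [Fintype.sum_eq_single S₀ (fun S hS => by rw [hL S hS, zero_smul])]
        rw [hL0, ← hts]
        exact Efam_comp_perm f _ σ
      · intro S
        by_cases hS : S = S₀
        · subst hS; exact ⟨(Equiv.Perm.sign σ : ℤ), by rw [hL0]⟩
        · exact ⟨0, by rw [hL S hS]; norm_cast⟩
    · have hE := Efam_noninj f ht
      rw [hE]
      constructor
      · rw [Finset.sum_eq_zero (fun S _ => by rw [map_zero, zero_smul])]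
      · intro S; exact ⟨0, by rw [map_zero]; norm_cast⟩
  | zero =>
    constructor
    · rw [Finset.sum_eq_zero (fun S _ => by rw [map_zero, zero_smul])]
    · intro S; exact ⟨0, by rw [map_zero]; norm_cast⟩
  | add x y hxm hym ihx ihy =>
    constructor
    · conv_lhs => rw [ihx.1, ihy.1]
      rw [← Finset.sum_add_distrib]
      refine Finset.sum_congr rfl fun S _ => ?_
      rw [map_add, add_smul]
    · intro S
      obtain ⟨z1, hz1⟩ := ihx.2 S
      obtain ⟨z2, hz2⟩ := ihy.2 S
      exact ⟨z1 + z2, by rw [map_add, hz1, hz2]; norm_cast⟩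
  | smul a x hxm ih =>
    have hsm : ∀ t₀ : Fin m → Fin n, Lfun φ t₀ (a • x) = a • Lfun φ t₀ x :=
      fun t₀ => map_zsmul (Lfun φ t₀) a x
    constructor
    · conv_lhs => rw [ih.1]
      rw [Finset.smul_sum]
      refine Finset.sum_congr rfl fun S _ => ?_
      rw [hsm, smul_assoc]
    · intro S
      obtain ⟨z, hz⟩ := ih.2 S
      refine ⟨a * z, ?_⟩
      rw [hsm, hz]
      push_cast
      rw [zsmul_eq_mul]

theorem W_finite {C : ℝ} (hC : 0 ≤ C) {f : Fin n → Fin k → ℝ}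
    (hf : LinearIndependent ℝ f) (m : ℕ) :
    {x : (Fin m → Fin k) → ℝ |
      x ∈ Submodule.span ℤ (Set.range (Efam f m)) ∧ ∀ s, |x s| ≤ C}.Finite := by
  classical
  obtain ⟨φ, hφ⟩ := exists_dual_family hf
  set W := {x : (Fin m → Fin k) → ℝ |
      x ∈ Submodule.span ℤ (Set.range (Efam f m)) ∧ ∀ s, |x s| ≤ C} with hW
  set K : {S : Finset (Fin n) // S.card = m} → ℝ := fun S =>
    ∑ s : Fin m → Fin k, |∏ a, φ (S.1.orderEmbOfFin S.2 a) (Pi.single (s a) (1 : ℝ))| with hK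
  have hbound : ∀ x ∈ W, ∀ S : {S : Finset (Fin n) // S.card = m},
      |Lfun φ (S.1.orderEmbOfFin S.2) x| ≤ K S * C := by
    intro x hx S
    rw [Lfun_apply]
    refine (Finset.abs_sum_le_sum_abs _ _).trans ?_
    rw [hK, Finset.sum_mul]
    refine Finset.sum_le_sum fun s _ => ?_
    rw [abs_mul]
    exact mul_le_mul_of_nonneg_left (hx.2 s) (abs_nonneg _)
  apply Set.Finite.of_finite_image
    (f := fun x (S : {S : Finset (Fin n) // S.card = m}) => Lfun φ (S.1.orderEmbOfFin S.2) x)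
  · apply Set.Finite.subset (Set.Finite.pi (fun S : {S : Finset (Fin n) // S.card = m} =>
      (Set.finite_Icc (-(⌈K S * C⌉)) ⌈K S * C⌉).image (fun z : ℤ => (z : ℝ))))
    rintro y ⟨x, hx, rfl⟩
    rw [Set.mem_pi]
    intro S _
    obtain ⟨z, hz⟩ := (key_span hφ hx.1).2 S
    have h1 : |(z : ℝ)| ≤ K S * C := by rw [← hz]; exact hbound x hx S
    have h2 : ((|z| : ℤ) : ℝ) ≤ (⌈K S * C⌉ : ℝ) := by
      rw [Int.cast_abs]
      exact h1.trans (Int.le_ceil _)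
    have h3 : |z| ≤ ⌈K S * C⌉ := by exact_mod_cast h2
    exact ⟨z, Set.mem_Icc.2 (abs_le.1 h3), hz.symm⟩
  · intro x hx y hy hxy
    rw [(key_span hφ hx.1).1, (key_span hφ hy.1).1]
    refine Finset.sum_congr rfl fun S _ => ?_
    have h := congrFun hxy S
    dsimp only at h
    rw [h]

end Key

section Decomp

variable {k n m : ℕ}

theorem minors_mem_span {Λ Δ : Submodule ℤ (Fin k → ℝ)} (hΔΛ : Δ ≤ Λ)
    (fb : Basis (Fin n) ℤ Λ) (b : Basis (Fin m) ℤ Δ) :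
    (fun s => ((Matrix.of fun i => (b i : Fin k → ℝ)).submatrix id s).det)
      ∈ Submodule.span ℤ (Set.range (Efam (fun j => (fb j : Fin k → ℝ)) m)) := by
  classical
  set F := Matrix.of fun j => (fb j : Fin k → ℝ) with hF
  set A : Matrix (Fin m) (Fin n) ℤ :=
    Matrix.of fun i j => fb.repr ⟨(b i : Fin k → ℝ), hΔΛ (b i).2⟩ j with hA
  have hM : (Matrix.of fun i => (b i : Fin k → ℝ)) = (A.map (Int.cast : ℤ → ℝ)) * F := by
    funext i l
    have h1 := fb.sum_repr ⟨(b i : Fin k → ℝ), hΔΛ (b i).2⟩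
    have h2 := congrArg (fun y : Λ => (y : Fin k → ℝ) l) h1
    simp only at h2
    show ((b i : Fin k → ℝ)) l = (A.map (Int.cast : ℤ → ℝ) * F) i l
    rw [← h2]
    have h3 : ((∑ j, fb.repr ⟨(b i : Fin k → ℝ), hΔΛ (b i).2⟩ j • fb j : Λ) : Fin k → ℝ)
        = ∑ j, (fb.repr ⟨(b i : Fin k → ℝ), hΔΛ (b i).2⟩ j : ℤ) • (fb j : Fin k → ℝ) := by
      push_cast
      rfl
    rw [Matrix.mul_apply, h3, Finset.sum_apply]
    refine Finset.sum_congr rfl fun j _ => ?_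
    rw [Matrix.map_apply]
    simp [hA, hF, zsmul_eq_mul]
  have hfun : (fun s => ((Matrix.of fun i => (b i : Fin k → ℝ)).submatrix id s).det)
      = ∑ t : Fin m → Fin n, (∏ i, A i (t i)) •
          Efam (fun j => (fb j : Fin k → ℝ)) m t := by
    funext s
    rw [Finset.sum_apply]
    rw [hM]
    have hsub : ((A.map (Int.cast : ℤ → ℝ)) * F).submatrix id s
        = (A.map (Int.cast : ℤ → ℝ)) * (F.submatrix id s) :=
      Matrix.submatrix_mul _ _ id id s Function.bijective_id
    rw [hsub, detExpand]
    refine Finset.sum_congr rfl fun t _ => ?_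
    have h4 : (F.submatrix id s).submatrix t id = F.submatrix t s := by
      rw [Matrix.submatrix_submatrix]; rfl
    rw [h4, Pi.smul_apply]
    show (∏ i, (A.map (Int.cast : ℤ → ℝ)) i (t i)) * (F.submatrix t s).det
        = (∏ i, A i (t i)) • (F.submatrix t s).det
    rw [zsmul_eq_mul]
    congr 1
    push_cast
    exact Finset.prod_congr rfl fun i _ => by rw [Matrix.map_apply]
  rw [hfun]
  exact Submodule.sum_mem _ fun t _ =>
    Submodule.smul_mem _ _ (Submodule.subset_span ⟨t, rfl⟩)

/-- Minors are invariant (up to sign) under a change of ℤ-basis. -/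
theorem abs_minor_basis_change {Δ : Submodule ℤ (Fin k → ℝ)}
    (b c : Basis (Fin m) ℤ Δ) (s : Fin m → Fin k) :
    |((Matrix.of fun i => (c i : Fin k → ℝ)).submatrix id s).det|
      = |((Matrix.of fun i => (b i : Fin k → ℝ)).submatrix id s).det| := by
  classical
  set U : Matrix (Fin m) (Fin m) ℤ := Matrix.of fun i j => b.repr (c i) j with hU
  have hM : (Matrix.of fun i => (c i : Fin k → ℝ))
      = (U.map (Int.cast : ℤ → ℝ)) * (Matrix.of fun i => (b i : Fin k → ℝ)) := by
    funext i l
    have h1 := b.sum_repr (c i)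
    have h2 := congrArg (fun y : Δ => (y : Fin k → ℝ) l) h1
    rw [Matrix.mul_apply]
    have h3 : ((∑ j, b.repr (c i) j • b j : Δ) : Fin k → ℝ)
        = ∑ j, (b.repr (c i) j : ℤ) • (b j : Fin k → ℝ) := by
      push_cast
      rfl
    show (c i : Fin k → ℝ) l = _
    rw [← h2, h3, Finset.sum_apply]
    refine Finset.sum_congr rfl fun j _ => ?_
    rw [Matrix.map_apply]
    simp [hU, zsmul_eq_mul]
  have hdetU : U.det = 1 ∨ U.det = -1 := by
    have h1 : U = (b.toMatrix c)ᵀ := by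
      ext i j
      rw [Matrix.transpose_apply, Basis.toMatrix_apply, hU]
      rfl
    have h2 : IsUnit (b.toMatrix c).det := by
      refine IsUnit.of_mul_eq_one (c.toMatrix b).det ?_
      rw [← Matrix.det_mul, Basis.toMatrix_mul_toMatrix_flip, Matrix.det_one]
    rw [h1, Matrix.det_transpose]
    exact Int.isUnit_iff.1 h2
  have hsub : ((U.map (Int.cast : ℤ → ℝ)) * (Matrix.of fun i => (b i : Fin k → ℝ))).submatrix id s
      = (U.map (Int.cast : ℤ → ℝ))
          * ((Matrix.of fun i => (b i : Fin k → ℝ)).submatrix id s) :=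
    Matrix.submatrix_mul _ _ id id s Function.bijective_id
  rw [hM, hsub, Matrix.det_mul, abs_mul]
  have hcast : (U.map (Int.cast : ℤ → ℝ)).det = ((U.det : ℤ) : ℝ) := by
    have := RingHom.map_det (Int.castRingHom ℝ) U
    rw [Int.coe_castRingHom] at this
    exact this.symm
  rw [hcast]
  rcases hdetU with h | h <;> rw [h] <;> norm_num

end Decomp

section Main

variable {k : ℕ}

theorem covol_comp_equiv {a b : ℕ} (γ : Fin a → (Fin k → ℝ)) (e : Fin b ≃ Fin a) :
    covol (γ ∘ e) = covol γ := by
  rw [covol, covol]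
  congr 1
  have h : (Matrix.of fun i j => dotProduct ((γ ∘ e) i) ((γ ∘ e) j))
      = (Matrix.of fun i j => dotProduct (γ i) (γ j)).submatrix e e := by
    ext i j; rfl
  rw [h, Matrix.det_submatrix_equiv_self]

/-- For a discrete subgroup `Λ` of `ℝ^k` and any `C > 0`, the set of primitive subgroups
`Δ ⊆ Λ` (i.e. with `ℝ-span(Δ) ∩ Λ = Δ`) of covolume less than `C` is finite. -/
theorem finitely_many_primitive_subgroups_of_small_covolume
    (k : ℕ) (Λ : Submodule ℤ (Fin k → ℝ)) (hΛ : DiscreteTopology Λ)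
    (C : ℝ) (hC : 0 < C) :
    {Δ : Submodule ℤ (Fin k → ℝ) |
      Δ ≤ Λ ∧
      ((Submodule.span ℝ (Δ : Set (Fin k → ℝ)) : Set (Fin k → ℝ)) ∩ (Λ : Set (Fin k → ℝ))
        = (Δ : Set (Fin k → ℝ))) ∧
      ∃ (m : ℕ) (b : Basis (Fin m) ℤ Δ),
        covol (fun i => (b i : Fin k → ℝ)) < C}.Finite := by
  classical
  haveI := hΛ
  -- a ℤ-basis of Λ
  set ι := Module.Free.ChooseBasisIndex ℤ Λ with hι
  set n := Fintype.card ι with hn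
  set fb : Basis (Fin n) ℤ Λ := (Module.Free.chooseBasis ℤ Λ).reindex (Fintype.equivFin ι)
    with hfb
  set f : Fin n → Fin k → ℝ := fun j => (fb j : Fin k → ℝ) with hf
  have hfli : LinearIndependent ℝ f := linearIndependent_coe_of_discrete Λ fb
  -- the invariant map
  set g : Submodule ℤ (Fin k → ℝ) → Σ m : ℕ, ((Fin m → Fin k) → ℝ) :=
    fun Δ => if h : ∃ m : ℕ, Nonempty (Basis (Fin m) ℤ Δ) then
      ⟨h.choose, fun s =>
        ((Matrix.of fun i => ((h.choose_spec.some) i : Fin k → ℝ)).submatrix id s).det⟩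
    else ⟨0, 0⟩ with hg
  have g_spec : ∀ Δ : Submodule ℤ (Fin k → ℝ), (∃ m : ℕ, Nonempty (Basis (Fin m) ℤ Δ)) →
      ∃ (m : ℕ) (b : Basis (Fin m) ℤ Δ), g Δ = ⟨m, fun s =>
        ((Matrix.of fun i => (b i : Fin k → ℝ)).submatrix id s).det⟩ :=
    fun Δ hP => ⟨hP.choose, hP.choose_spec.some, dif_pos hP⟩
  apply Set.Finite.of_finite_image (f := g)
  · -- image is finite
    apply Set.Finite.subset (Set.Finite.biUnion (Finset.range (k + 1)).finite_toSet
      (fun m _ => (Set.Finite.image (Sigma.mk m) (W_finite hC.le hfli m))))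
    rintro y ⟨Δ, ⟨hΔΛ, hprim, m₀, b₀, hcov⟩, rfl⟩
    haveI hdisc : DiscreteTopology Δ := discrete_of_le hΛ hΔΛ
    obtain ⟨m', b', hgΔ⟩ := g_spec Δ ⟨m₀, ⟨b₀⟩⟩
    -- transfer the covolume bound to b'
    have e := b₀.indexEquiv b'
    have hb2 : covol (fun i => ((b₀.reindex e) i : Fin k → ℝ)) < C := by
      have h1 : (fun i => ((b₀.reindex e) i : Fin k → ℝ))
          = (fun i => (b₀ i : Fin k → ℝ)) ∘ e.symm := by
        funext i; rw [Basis.reindex_apply]; rfl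
      rw [h1, covol_comp_equiv]
      exact hcov
    have hminor : ∀ s : Fin m' → Fin k,
        |((Matrix.of fun i => (b' i : Fin k → ℝ)).submatrix id s).det| ≤ C := by
      intro s
      rw [abs_minor_basis_change (b₀.reindex e) b' s]
      exact minor_abs_le_of_covol_lt hC _ hb2 s
    rw [Set.mem_iUnion₂]
    refine ⟨m', ?_, ?_⟩
    · simp only [Finset.coe_range, Set.mem_Iio]
      exact Nat.lt_succ_of_le (card_le_of_discrete Δ b')
    · rw [hgΔ]
      exact Set.mem_image_of_mem _ ⟨minors_mem_span hΔΛ fb b', hminor⟩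
  · -- injectivity on the set
    rintro Δ₁ ⟨hΔΛ₁, hprim₁, m₁', b₁', hcov₁⟩ Δ₂ ⟨hΔΛ₂, hprim₂, m₂', b₂', hcov₂⟩ hgeq
    haveI hdisc₁ : DiscreteTopology Δ₁ := discrete_of_le hΛ hΔΛ₁
    haveI hdisc₂ : DiscreteTopology Δ₂ := discrete_of_le hΛ hΔΛ₂
    obtain ⟨m₁, b₁, hg₁⟩ := g_spec Δ₁ ⟨m₁', ⟨b₁'⟩⟩
    obtain ⟨m₂, b₂, hg₂⟩ := g_spec Δ₂ ⟨m₂', ⟨b₂'⟩⟩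
    rw [hg₁, hg₂] at hgeq
    obtain ⟨hm, hwheq⟩ := Sigma.mk.inj_iff.1 hgeq
    subst hm
    have hw : ∀ s : Fin m₁ → Fin k,
        ((Matrix.of fun i => (b₁ i : Fin k → ℝ)).submatrix id s).det
          = ((Matrix.of fun i => (b₂ i : Fin k → ℝ)).submatrix id s).det :=
      congrFun (eq_of_heq hwheq)
    have hli₁ : LinearIndependent ℝ (fun i => (b₁ i : Fin k → ℝ)) :=
      linearIndependent_coe_of_discrete Δ₁ b₁
    obtain ⟨S, hS⟩ := exists_nonzero_minor hli₁
    have hspan := span_eq_of_minors_eq hw hS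
    have hrows₁ : (fun i => (Matrix.of fun i => (b₁ i : Fin k → ℝ)) i)
        = fun i => (b₁ i : Fin k → ℝ) := rfl
    have hrows₂ : (fun i => (Matrix.of fun i => (b₂ i : Fin k → ℝ)) i)
        = fun i => (b₂ i : Fin k → ℝ) := rfl
    rw [hrows₁, hrows₂] at hspan
    have hsp : Submodule.span ℝ (Δ₁ : Set (Fin k → ℝ))
        = Submodule.span ℝ (Δ₂ : Set (Fin k → ℝ)) := by
      rw [span_coe_eq Δ₁ b₁, span_coe_eq Δ₂ b₂, hspan]
    apply SetLike.coe_injective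
    rw [← hprim₁, ← hprim₂, hsp]


end Main
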